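/- For every element x of Q: x^a = x^{dad} = x^{d̄ a d̄} = x^{de} = x^{e d̄}. -/
import Mathlib


/-- A quandle as in the paper: a set with operations `▷` and `▷⁻¹` satisfying
axioms A1, A2, A3. -/
class PaperQuandle (Q : Type*) where
  rhd : Q → Q → Q
  rhdInv : Q → Q → Q
  fix : ∀ x : Q, rhd x x = x
  inv_rhd : ∀ x y : Q, rhdInv (rhd x y) y = x
  rhd_inv : ∀ x y : Q, rhd (rhdInv x y) y = x
  self_distrib : ∀ x y z : Q, rhd (rhd x y) z = rhd (rhd x z) (rhd y z)

infixl:65 " ▷ " => PaperQuandle.rhd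
infixl:65 " ▷⁻¹ " => PaperQuandle.rhdInv

/-- The point symmetry at `u`, as a permutation of `Q`: `x ↦ x ▷ u`,
with inverse `x ↦ x ▷⁻¹ u`. -/
def ptSym {Q : Type*} [PaperQuandle Q] (u : Q) : Equiv.Perm Q where
  toFun x := x ▷ u
  invFun x := x ▷⁻¹ u
  left_inv x := PaperQuandle.inv_rhd x u
  right_inv x := PaperQuandle.rhd_inv x u

theorem stmt_3
    {Q : Type*} [PaperQuandle Q] (k : ℤ) (m n : ℕ) (a b c d e f : Q)
    (hk : 1 ≤ k) (hm : 0 < m) (hn : 0 < n)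
    (rel_a : ∀ x : Q, x ▷ a ▷ a = x)
    (rel_b : ∀ x : Q, x ▷ b ▷ b = x)
    (rel_e : ∀ x : Q, x ▷ e ▷ e = x)
    (rel_f : ∀ x : Q, x ▷ f ▷ f = x)
    (rel_c : ∀ x : Q, (ptSym c ^ m) x = x)
    (rel_d : ∀ x : Q, (ptSym d ^ n) x = x)
    (rel_dea : ∀ x : Q, x ▷ d ▷ e ▷ a = x)
    (rel_bdf : ∀ x : Q, x ▷ b ▷ d ▷ f = x)
    (rel_cke : ∀ x : Q, (((ptSym b * ptSym a) ^ k) (x ▷ c)) ▷ a ▷ e = x)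
    (rel_fca : ∀ x : Q, (((ptSym b * ptSym a) ^ (k - 1)) (x ▷ f ▷ c)) ▷ a = x) :
    ∀ x : Q, x ▷ a = x ▷ d ▷ a ▷ d ∧ x ▷ a = x ▷⁻¹ d ▷ a ▷⁻¹ d ∧
      x ▷ a = x ▷ d ▷ e ∧ x ▷ a = x ▷ e ▷⁻¹ d := by
  have hinv : ∀ (u : Q), (∀ y : Q, y ▷ u ▷ u = y) → ∀ y : Q, y ▷⁻¹ u = y ▷ u := by
    intro u hu y
    have h := PaperQuandle.inv_rhd (y ▷ u) u
    rw [hu] at h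
    exact h
  have de : ∀ y : Q, y ▷ d ▷ e = y ▷ a := by
    intro y
    have h := congrArg (· ▷ a) (rel_dea y)
    simpa [rel_a] using h
  have ad : ∀ y : Q, y ▷ a ▷ d = y ▷ e := by
    intro y
    have h : y ▷ a ▷ d ▷ e = y := by rw [de, rel_a]
    have h2 := congrArg (· ▷⁻¹ e) h
    simp only [PaperQuandle.inv_rhd] at h2
    rw [h2, hinv e rel_e]
  have ed : ∀ y : Q, y ▷ e ▷⁻¹ d = y ▷ a := by
    intro y
    rw [← ad, PaperQuandle.inv_rhd]
  intro x
  have da : x ▷ d ▷ a = x ▷ a ▷⁻¹ d := by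
    rw [← ed (x ▷ d), de]
  refine ⟨?_, ?_, (de x).symm, (ed x).symm⟩
  · rw [da, PaperQuandle.rhd_inv]
  · have h1 : x ▷⁻¹ d ▷ a = x ▷ a ▷ d := by
      rw [← de (x ▷⁻¹ d), PaperQuandle.rhd_inv, ad]
    rw [h1, PaperQuandle.inv_rhd]
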